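/- Let τ > 0, let K ⊆ ℝⁿ, let h₁ : ℝⁿ → ℝ be continuously differentiable, let e₂ : ℝⁿ → ℝⁿ and C ∈ ℝⁿ. Fix t ∈ ℝ and let x : ℝ → ℝⁿ be continuously differentiable on [t−τ, t] with x(θ) ∈ K and |x′(θ)| ≤ C coordinatewise for all θ ∈ [t−τ, t]. Assume that coordinatewise |∇h₁(b)| ≤ e₂(a) for all a, b ∈ K. Then ∫_{t−τ}^{t} h₁(x(θ)) dθ ≥ τ·h₁(x(t)) − (τ²/2)·e₂(x(t))ᵀC; consequently, for any h₀ : ℝⁿ → ℝ, h₀(x(t)) + ∫_{t−τ}^{t} h₁(x(θ)) dθ ≥ h₀(x(t)) + τ·h₁(x(t)) − (τ²/2)·e₂(x(t))ᵀC. -/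

import Mathlib

open intervalIntegral

/-- Lower bound on the integral term of the reach-avoid barrier functional
(derivation of the boundary condition (2b) from (6b) in the proof of Theorem 2):
under the coordinatewise bounds `|∇h₁(b)| ≤ e₂(a)` on `K` and `|x'| ≤ C` on
`[t-τ, t]`, `∫_{t-τ}^{t} h₁(x θ) dθ ≥ τ·h₁(x t) - (τ²/2)·e₂(x t)ᵀ C`; consequently,
for any `h₀`, `h₀(x t) + ∫_{t-τ}^{t} h₁(x θ) dθ ≥ h₀(x t) + τ·h₁(x t) - (τ²/2)·e₂(x t)ᵀ C`. -/
theorem stmt_4 {n : ℕ} (τ : ℝ) (hτ : 0 < τ) (K : Set (Fin n → ℝ))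
    (h₁ : (Fin n → ℝ) → ℝ) (hh₁ : ContDiff ℝ 1 h₁)
    (e₂ : (Fin n → ℝ) → (Fin n → ℝ)) (C : Fin n → ℝ)
    (t : ℝ) (x x' : ℝ → (Fin n → ℝ))
    (hx : ∀ θ ∈ Set.Icc (t - τ) t, HasDerivAt x (x' θ) θ)
    (hx'c : ContinuousOn x' (Set.Icc (t - τ) t))
    (hxK : ∀ θ ∈ Set.Icc (t - τ) t, x θ ∈ K)
    (hx'C : ∀ θ ∈ Set.Icc (t - τ) t, ∀ i, |x' θ i| ≤ C i)
    (he₂ : ∀ a ∈ K, ∀ b ∈ K, ∀ i, |fderiv ℝ h₁ b (Pi.single i 1)| ≤ e₂ a i) :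
    τ * h₁ (x t) - (τ ^ 2 / 2) * ∑ i, e₂ (x t) i * C i ≤ (∫ θ in (t - τ)..t, h₁ (x θ)) ∧
    ∀ h₀ : (Fin n → ℝ) → ℝ,
      h₀ (x t) + τ * h₁ (x t) - (τ ^ 2 / 2) * ∑ i, e₂ (x t) i * C i ≤
        h₀ (x t) + ∫ θ in (t - τ)..t, h₁ (x θ) := by
  have hab : t - τ ≤ t := by linarith
  have htI : t ∈ Set.Icc (t - τ) t := ⟨hab, le_refl t⟩
  set M : ℝ := ∑ i, e₂ (x t) i * C i with hM
  have hlin : ∀ (f : (Fin n → ℝ) →L[ℝ] ℝ) (v : Fin n → ℝ),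
      f v = ∑ i, v i * f (Pi.single i 1) := by
    intro f v
    have hv : v = ∑ i, v i • (Pi.single i 1 : Fin n → ℝ) := by
      funext j
      simp [Finset.sum_apply, Pi.single_apply]
    conv_lhs => rw [hv]
    rw [map_sum]
    simp [smul_eq_mul]
  have hd : ∀ s ∈ Set.Icc (t - τ) t,
      HasDerivAt (fun θ => h₁ (x θ)) ((fderiv ℝ h₁ (x s)) (x' s)) s := by
    intro s hs
    exact ((hh₁.differentiable one_ne_zero).differentiableAt.hasFDerivAt).comp_hasDerivAt s (hx s hs)
  have hbound : ∀ s ∈ Set.Icc (t - τ) t, ‖(fderiv ℝ h₁ (x s)) (x' s)‖ ≤ M := by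
    intro s hs
    rw [Real.norm_eq_abs, hlin]
    calc |∑ i, x' s i * (fderiv ℝ h₁ (x s)) (Pi.single i 1)|
        ≤ ∑ i, |x' s i * (fderiv ℝ h₁ (x s)) (Pi.single i 1)| :=
          Finset.abs_sum_le_sum_abs _ _
      _ ≤ M := by
          apply Finset.sum_le_sum
          intro i _
          rw [abs_mul]
          have h1 := hx'C s hs i
          have h2 := he₂ (x t) (hxK t htI) (x s) (hxK s hs) i
          calc |x' s i| * |(fderiv ℝ h₁ (x s)) (Pi.single i 1)|
              ≤ C i * e₂ (x t) i :=
                mul_le_mul h1 h2 (abs_nonneg _) ((abs_nonneg _).trans h1)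
            _ = e₂ (x t) i * C i := mul_comm _ _
  have hpt : ∀ θ ∈ Set.Icc (t - τ) t, h₁ (x t) - (t - θ) * M ≤ h₁ (x θ) := by
    intro θ hθ
    have hmv := (convex_Icc (t - τ) t).norm_image_sub_le_of_norm_hasDerivWithin_le
      (fun s hs => (hd s hs).hasDerivWithinAt) hbound htI hθ
    rw [Real.norm_eq_abs, Real.norm_eq_abs] at hmv
    have habs : |θ - t| = t - θ := by
      rw [abs_of_nonpos (by linarith [hθ.2])]; ring
    rw [habs] at hmv
    have := (abs_le.mp hmv).1
    nlinarith [this]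
  have hcx : ContinuousOn (fun θ => h₁ (x θ)) (Set.Icc (t - τ) t) :=
    hh₁.continuous.comp_continuousOn
      (fun s hs => (hx s hs).continuousAt.continuousWithinAt)
  have hint1 : IntervalIntegrable (fun θ => h₁ (x θ)) MeasureTheory.volume (t - τ) t :=
    ContinuousOn.intervalIntegrable (by rw [Set.uIcc_of_le hab]; exact hcx)
  have hint2 : IntervalIntegrable (fun θ => h₁ (x t) - (t - θ) * M)
      MeasureTheory.volume (t - τ) t :=
    ((continuous_const.sub ((continuous_const.sub continuous_id).mul
      continuous_const)).intervalIntegrable _ _)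
  have hmono := intervalIntegral.integral_mono_on hab hint2 hint1 hpt
  have hcalc : (∫ θ in (t - τ)..t, (h₁ (x t) - (t - θ) * M))
      = τ * h₁ (x t) - τ ^ 2 / 2 * M := by
    have heq : (fun θ => h₁ (x t) - (t - θ) * M)
        = fun θ => (h₁ (x t) - t * M) + θ * M := by funext θ; ring
    rw [heq, intervalIntegral.integral_add intervalIntegrable_const
        ((by fun_prop : Continuous fun θ : ℝ => θ * M).intervalIntegrable _ _),
      intervalIntegral.integral_mul_const, intervalIntegral.integral_const,
      integral_id]
    simp only [smul_eq_mul]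
    ring
  have key : τ * h₁ (x t) - τ ^ 2 / 2 * M ≤ ∫ θ in (t - τ)..t, h₁ (x θ) := by
    rw [← hcalc]; exact hmono
  exact ⟨key, fun h₀ => by linarith⟩
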